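/- (Convolution of symmetric decreasing functions) If f, g : ℝ^3 → [0,∞) are radial, non-increasing as functions of |x|, integrable, and at least one is strictly decreasing, then f ∗ g is radial and non-increasing in |x|; if moreover f > 0 and g is strictly decreasing, f ∗ g is strictly decreasing in |x|. -/

import Mathlib

open MeasureTheory Set Metric
open scoped RealInnerProductSpace

set_option maxHeartbeats 1000000
noncomputable section

private abbrev E3 := EuclideanSpace ℝ (Fin 3)

private theorem conv_key (f g : E3 → ℝ)
    (hf0 : ∀ x, 0 ≤ f x) (hg0 : ∀ x, 0 ≤ g x)
    (hfint : Integrable f) (hgint : Integrable g)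
    (hfrad : ∀ x y : E3, ‖x‖ = ‖y‖ → f x = f y)
    (hgdec : ∀ x y : E3, ‖x‖ ≤ ‖y‖ → g y ≤ g x)
    (hfdec : ∀ x y : E3, ‖x‖ ≤ ‖y‖ → f y ≤ f x)
    (x y : E3) (hxy : ‖x‖ ≤ ‖y‖) :
    (∫ z, f (y - z) * g z) ≤ (∫ z, f (x - z) * g z) ∧
    ((∀ w, 0 < f w) → (∀ u v : E3, ‖u‖ < ‖v‖ → g v < g u) → ‖x‖ < ‖y‖ →
      (∫ z, f (y - z) * g z) < (∫ z, f (x - z) * g z)) := by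
  by_cases hne : x = y
  · subst hne
    exact ⟨le_rfl, fun _ _ h => absurd h (lt_irrefl _)⟩
  -- setup
  set n : E3 := y - x with hn_def
  have hn : n ≠ 0 := sub_ne_zero.2 (Ne.symm hne)
  have hn' : ‖n‖ ≠ 0 := norm_ne_zero_iff.2 hn
  have hnpos : 0 < ‖n‖ := (norm_nonneg n).lt_of_ne (Ne.symm hn')
  have hN : (0:ℝ) < ‖n‖^2 := by positivity
  set c : ℝ := (‖y‖^2 - ‖x‖^2)/2 with hc_def
  have hc : 0 ≤ c := by
    have := norm_nonneg x; have := norm_nonneg y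
    simp only [hc_def]; nlinarith
  set σ : E3 → E3 := fun z => z + ((2 * (c - ⟪z, n⟫)) / ‖n‖^2) • n with hσ_def
  have hyx : y = x + n := by simp [hn_def]
  have hcx : 2*c = 2*⟪x, n⟫ + ‖n‖^2 := by
    have : ‖y‖^2 = ‖x‖^2 + 2*⟪x, n⟫ + ‖n‖^2 := by rw [hyx]; exact norm_add_sq_real x n
    simp only [hc_def]; linarith
  have F1 : ∀ z, ⟪σ z, n⟫ = 2*c - ⟪z, n⟫ := by
    intro z
    simp only [hσ_def, inner_add_left, real_inner_smul_left, real_inner_self_eq_norm_sq]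
    field_simp
    ring
  have F2 : ∀ z, ‖x - σ z‖ = ‖y - z‖ := by
    intro z
    have hsq : ‖x - σ z‖^2 = ‖y - z‖^2 := by
      have e1 : x - σ z = (x - z) - ((2 * (c - ⟪z, n⟫)) / ‖n‖^2) • n := by
        simp only [hσ_def]; abel
      have e2 : y - z = (x - z) + n := by rw [hyx]; abel
      have hxn : ⟪x, n⟫ = c - ‖n‖^2/2 := by linarith
      rw [e1, e2]
      simp only [norm_sub_sq_real, norm_add_sq_real, real_inner_smul_right, inner_sub_left,
        norm_smul, Real.norm_eq_abs, mul_pow, sq_abs, real_inner_self_eq_norm_sq, hxn]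
      field_simp
      ring
    nlinarith [norm_nonneg (x - σ z), norm_nonneg (y - z)]
  have F4 : ∀ z, σ (σ z) = z := by
    intro z
    have h1 : σ (σ z) = σ z + ((2 * (c - ⟪σ z, n⟫)) / ‖n‖^2) • n := rfl
    rw [h1, F1]
    simp only [hσ_def]
    module
  have F3 : ∀ z, ‖y - σ z‖ = ‖x - z‖ := by
    intro z
    have := F2 (σ z)
    rw [F4 z] at this
    exact this.symm
  have F5 : ∀ z, ‖z‖^2 + 4*(c - ⟪z, n⟫)*c/‖n‖^2 = ‖σ z‖^2 := by
    intro z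
    simp only [hσ_def]
    rw [norm_add_sq_real, real_inner_smul_right, norm_smul, Real.norm_eq_abs, mul_pow, sq_abs]
    field_simp
    ring
  have F11 : ∀ z : E3, ‖y - z‖^2 - ‖x - z‖^2 = 2*(c - ⟪z, n⟫) := by
    intro z
    have e2 : y - z = (x - z) + n := by rw [hyx]; abel
    have hxn : ⟪x, n⟫ = c - ‖n‖^2/2 := by linarith
    rw [e2, norm_add_sq_real, inner_sub_left, hxn]; ring
  -- measure preservation of σ
  obtain ⟨hσmp, hσemb⟩ :
      MeasurePreserving σ volume volume ∧ MeasurableEmbedding σ := by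
    set R : E3 ≃ₗᵢ[ℝ] E3 := ((ℝ ∙ n).reflection).trans (LinearIsometryEquiv.neg ℝ) with hR
    have hRz : ∀ z, R z = z - ((2 * ⟪n, z⟫) / ‖n‖^2) • n := by
      intro z
      have h1 : ((ℝ ∙ n).starProjection z : E3) = (⟪n, z⟫ / ((‖n‖:ℝ)^2)) • n := by
        rw [Submodule.starProjection_singleton]; norm_num
      have h2 : R z = -((ℝ ∙ n).reflection z) := by
        simp [hR, LinearIsometryEquiv.trans_apply, LinearIsometryEquiv.coe_neg]
      rw [h2, Submodule.reflection_apply, h1]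
      module
    have key : σ = (fun w : E3 => w + ((2 * c) / ‖n‖^2) • n) ∘ R := by
      funext z
      simp only [hσ_def, Function.comp_apply, hRz]
      rw [real_inner_comm z n]
      module
    constructor
    · rw [key]
      exact (measurePreserving_add_right volume _).comp R.measurePreserving
    · rw [key]
      exact (MeasurableEquiv.addRight _).measurableEmbedding.comp
        R.toHomeomorph.toMeasurableEquiv.measurableEmbedding
  -- integrability
  have hfb : ∀ w, f w ≤ f 0 := fun w => hfdec 0 w (by simp)
  have hconv_int : ∀ a : E3, Integrable (fun z => f (a - z) * g z) := by
    intro a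
    have hmp := Measure.measurePreserving_sub_left (volume : Measure E3) a
    have h1 : AEStronglyMeasurable (fun z => f (a - z)) volume :=
      hfint.1.comp_quasiMeasurePreserving hmp.quasiMeasurePreserving
    refine Integrable.mono' (hgint.const_mul (f 0)) (h1.mul hgint.1)
      (Filter.Eventually.of_forall fun z => ?_)
    rw [Real.norm_eq_abs, abs_of_nonneg (mul_nonneg (hf0 _) (hg0 _))]
    exact mul_le_mul_of_nonneg_right (hfb _) (hg0 _)
  have hgσint : Integrable (fun z => g (σ z)) := by
    have := (hσmp.integrable_comp hgint.1).2 hgint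
    exact this
  have hconv_intσ : ∀ a : E3, Integrable (fun z => f (a - z) * g (σ z)) := by
    intro a
    have hmp := Measure.measurePreserving_sub_left (volume : Measure E3) a
    have h1 : AEStronglyMeasurable (fun z => f (a - z)) volume :=
      hfint.1.comp_quasiMeasurePreserving hmp.quasiMeasurePreserving
    refine Integrable.mono' (hgσint.const_mul (f 0)) (h1.mul hgσint.1)
      (Filter.Eventually.of_forall fun z => ?_)
    rw [Real.norm_eq_abs, abs_of_nonneg (mul_nonneg (hf0 _) (hg0 _))]
    exact mul_le_mul_of_nonneg_right (hfb _) (hg0 _)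
  -- the half-space
  set H : Set E3 := {z | ⟪z, n⟫ < c} with hH_def
  have hHopen : IsOpen H := isOpen_lt (Continuous.inner continuous_id continuous_const)
    continuous_const
  have HM : MeasurableSet H := hHopen.measurableSet
  -- the hyperplane is null
  have hplane : volume {z : E3 | ⟪z, n⟫ = c} = 0 := by
    set K : Submodule ℝ E3 := LinearMap.ker (innerSL ℝ n : E3 →ₗ[ℝ] ℝ) with hK_def
    have hKne : K ≠ ⊤ := by
      intro htop
      have hmem : n ∈ K := htop ▸ Submodule.mem_top
      have : ⟪n, n⟫ = 0 := by simpa [hK_def, LinearMap.mem_ker] using hmem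
      rw [real_inner_self_eq_norm_sq] at this
      exact hN.ne' this
    have h0 : volume (K : Set E3) = 0 := Measure.addHaar_submodule volume K hKne
    have hKm : MeasurableSet (K : Set E3) := by
      have : (K : Set E3) = (fun z => ⟪n, z⟫) ⁻¹' {0} := by
        ext z; simp [hK_def, LinearMap.mem_ker]
      rw [this]
      exact (Continuous.inner continuous_const continuous_id).measurable
        (measurableSet_singleton 0)
    have hmp := measurePreserving_add_right (volume : Measure E3) (-((c/‖n‖^2) • n))
    have himg : {z : E3 | ⟪z, n⟫ = c} = (fun z : E3 => z + -((c/‖n‖^2) • n)) ⁻¹' K := by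
      ext z
      simp only [mem_preimage, SetLike.mem_coe, hK_def, LinearMap.mem_ker,
        ContinuousLinearMap.coe_coe, innerSL_apply_apply, mem_setOf_eq]
      rw [inner_add_right, inner_neg_right, real_inner_smul_right,
        real_inner_self_eq_norm_sq, real_inner_comm]
      constructor
      · intro h; rw [h]; field_simp; ring
      · intro h
        have : c / ‖n‖ ^ 2 * ‖n‖ ^ 2 = c := by field_simp
        linarith
    rw [himg, hmp.measure_preimage hKm.nullMeasurableSet]
    exact h0
  have haeeq : {z : E3 | ⟪z, n⟫ ≤ c} =ᵐ[volume] H := by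
    rw [MeasureTheory.ae_eq_set]
    constructor
    · refine measure_mono_null ?_ hplane
      intro z hz
      simp only [mem_diff, mem_setOf_eq, hH_def, not_lt] at hz
      simp only [mem_setOf_eq]
      exact le_antisymm hz.1 hz.2
    · have : H \ {z : E3 | ⟪z, n⟫ ≤ c} = ∅ := by
        ext z; simp only [mem_diff, mem_setOf_eq, hH_def, not_le, mem_empty_iff_false,
          iff_false, not_and, not_lt]
        intro h; exact le_of_lt h
      rw [this]; exact measure_empty
  -- the key identity
  have hsub : Integrable (fun z => (f (x - z) - f (y - z)) * g z) := by
    have : (fun z => (f (x - z) - f (y - z)) * g z)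
        = fun z => f (x - z) * g z - f (y - z) * g z := by funext z; ring
    rw [this]; exact (hconv_int x).sub (hconv_int y)
  have hsubσ : Integrable (fun z => (f (y - z) - f (x - z)) * g (σ z)) := by
    have : (fun z => (f (y - z) - f (x - z)) * g (σ z))
        = fun z => f (y - z) * g (σ z) - f (x - z) * g (σ z) := by funext z; ring
    rw [this]; exact (hconv_intσ y).sub (hconv_intσ x)
  have KQ : (∫ z, f (x - z) * g z) - (∫ z, f (y - z) * g z)
      = ∫ z in H, (f (x - z) - f (y - z)) * (g z - g (σ z)) := by
    have step1 : (∫ z, f (x - z) * g z) - (∫ z, f (y - z) * g z)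
        = ∫ z, (f (x - z) - f (y - z)) * g z := by
      rw [← integral_sub (hconv_int x) (hconv_int y)]
      congr 1; funext z; ring
    have step2 : (∫ z, (f (x - z) - f (y - z)) * g z)
        = (∫ z in H, (f (x - z) - f (y - z)) * g z)
          + ∫ z in Hᶜ, (f (x - z) - f (y - z)) * g z :=
      (integral_add_compl HM hsub).symm
    have step3 : (∫ z in Hᶜ, (f (x - z) - f (y - z)) * g z)
        = ∫ w in σ ⁻¹' Hᶜ, (f (x - σ w) - f (y - σ w)) * g (σ w) :=
      (hσmp.setIntegral_preimage_emb hσemb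
        (fun z => (f (x - z) - f (y - z)) * g z) Hᶜ).symm
    have step4 : σ ⁻¹' Hᶜ = {w : E3 | ⟪w, n⟫ ≤ c} := by
      ext w
      simp only [mem_preimage, mem_compl_iff, hH_def, mem_setOf_eq, not_lt, F1]
      constructor <;> intro h <;> linarith
    have step5 : (∫ w in {w : E3 | ⟪w, n⟫ ≤ c}, (f (x - σ w) - f (y - σ w)) * g (σ w))
        = ∫ w in H, (f (x - σ w) - f (y - σ w)) * g (σ w) :=
      setIntegral_congr_set haeeq
    have step6 : ∀ w, (f (x - σ w) - f (y - σ w)) * g (σ w)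
        = (f (y - w) - f (x - w)) * g (σ w) := by
      intro w
      rw [hfrad (x - σ w) (y - w) (F2 w), hfrad (y - σ w) (x - w) (F3 w)]
    have step7 : (∫ w in H, (f (x - σ w) - f (y - σ w)) * g (σ w))
        = ∫ w in H, (f (y - w) - f (x - w)) * g (σ w) := by
      congr 1; funext w; exact step6 w
    rw [step1, step2, step3, step4, step5, step7, ← integral_add
      hsub.integrableOn hsubσ.integrableOn]
    congr 1; funext z; ring
  -- pointwise inequalities on H
  have hAB : ∀ z ∈ H, f (y - z) ≤ f (x - z) ∧ g (σ z) ≤ g z := by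
    intro z hz
    have hzc : ⟪z, n⟫ < c := hz
    constructor
    · refine hfdec (x - z) (y - z) ?_
      have := F11 z
      nlinarith [norm_nonneg (x - z), norm_nonneg (y - z)]
    · refine hgdec z (σ z) ?_
      have h4 : 0 ≤ 4*(c - ⟪z, n⟫)*c/‖n‖^2 := div_nonneg (by nlinarith) hN.le
      have hsq : ‖z‖^2 ≤ ‖σ z‖^2 := by linarith [F5 z]
      nlinarith [norm_nonneg z, norm_nonneg (σ z)]
  have hnonneg : ∀ z ∈ H, 0 ≤ (f (x - z) - f (y - z)) * (g z - g (σ z)) := by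
    intro z hz
    obtain ⟨h1, h2⟩ := hAB z hz
    exact mul_nonneg (sub_nonneg.2 h1) (sub_nonneg.2 h2)
  have hmain : 0 ≤ ∫ z in H, (f (x - z) - f (y - z)) * (g z - g (σ z)) :=
    setIntegral_nonneg HM hnonneg
  constructor
  · linarith [KQ]
  -- strict part
  intro hf_pos hg_strict hlt
  have hcpos : 0 < c := by
    have := norm_nonneg x; have := norm_nonneg y
    simp only [hc_def]; nlinarith
  set e : E3 := EuclideanSpace.single (0 : Fin 3) (1:ℝ) with he_def
  have he : ‖e‖ = 1 := by simp [he_def]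
  have hre : ∀ r : ℝ, 0 ≤ r → ‖r • e‖ = r := by
    intro r hr
    rw [norm_smul, he, Real.norm_eq_abs, abs_of_nonneg hr, mul_one]
  set d : ℝ := ‖n‖/2 with hd_def
  have hd : 0 < d := by positivity
  -- find a gap of f at scale < ‖n‖
  have hab : ∃ a b : ℝ, d ≤ a ∧ a < b ∧ b ≤ a + d ∧ f (b • e) < f (a • e) := by
    by_contra hcon
    push_neg at hcon
    have heq : ∀ a b : ℝ, d ≤ a → a ≤ b → b ≤ a + d → f (a • e) = f (b • e) := by
      intro a b hda hab hbad
      rcases eq_or_lt_of_le hab with h | h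
      · rw [h]
      · refine le_antisymm (hcon a b hda h hbad) (hfdec (a • e) (b • e) ?_)
        rw [hre a (hd.le.trans hda), hre b (((hd.le.trans hda)).trans hab)]
        exact hab
    have hstep : ∀ k : ℕ, f ((d + k*d) • e) = f (d • e) := by
      intro k
      induction k with
      | zero => norm_num
      | succ m ih =>
        have hcast : ((m+1 : ℕ) : ℝ) = (m : ℝ) + 1 := by push_cast; ring
        have hmd : (0:ℝ) ≤ (m:ℝ)*d := mul_nonneg (Nat.cast_nonneg m) hd.le
        have h1 : d ≤ d + (m:ℝ)*d := by linarith
        rw [hcast, ← ih]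
        refine (heq (d + (m:ℝ)*d) (d + ((m:ℝ)+1)*d) h1 (by nlinarith) (by nlinarith)).symm
    have hall : ∀ r : ℝ, d ≤ r → f (r • e) = f (d • e) := by
      intro r hr
      obtain ⟨k, hk⟩ := exists_nat_ge ((r - d)/d)
      have hk' : r ≤ d + k*d := by
        have := (div_le_iff₀ hd).1 hk
        linarith
      have h1 : f ((d + k*d) • e) ≤ f (r • e) := by
        refine hfdec (r • e) ((d + k*d) • e) ?_
        rw [hre r (hd.le.trans hr), hre (d + k*d) (by positivity)]
        exact hk'
      have h2 : f (r • e) ≤ f (d • e) := by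
        refine hfdec (d • e) (r • e) ?_
        rw [hre d hd.le, hre r (hd.le.trans hr)]
        exact hr
      have h3 := hstep k
      linarith
    have hval : ∀ z : E3, d ≤ ‖z‖ → f z = f (d • e) := by
      intro z hz
      have : f z = f (‖z‖ • e) := hfrad z (‖z‖ • e) (by rw [hre _ (norm_nonneg z)])
      rw [this]
      exact hall _ hz
    set v : ℝ := f (d • e) with hv_def
    have hv : 0 < v := hf_pos _
    have hind : Integrable ((closedBall (0:E3) d)ᶜ.indicator (fun _ => v)) := by
      refine Integrable.mono' hfint
        ((stronglyMeasurable_const.indicator measurableSet_closedBall.compl).aestronglyMeasurable)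
        (Filter.Eventually.of_forall fun z => ?_)
      by_cases hz : z ∈ (closedBall (0:E3) d)ᶜ
      · rw [Set.indicator_of_mem hz]
        have hdz : d ≤ ‖z‖ := by
          simp only [mem_compl_iff, mem_closedBall, dist_zero_right, not_le] at hz
          exact hz.le
        rw [Real.norm_eq_abs, abs_of_nonneg hv.le, hval z hdz]
      · rw [Set.indicator_of_notMem hz]
        simpa using hf0 z
    rw [integrable_indicator_iff measurableSet_closedBall.compl] at hind
    rcases (integrableOn_const_iff enorm_ne_top).1 hind with h | h
    · simp at h; exact hv.ne' h
    · have huniv : (volume : Measure E3) Set.univ = ⊤ := measure_univ_of_isAddLeftInvariant _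
      have hsplit : (volume : Measure E3) Set.univ
          ≤ volume (closedBall (0:E3) d) + volume (closedBall (0:E3) d)ᶜ := by
        rw [← Set.union_compl_self (closedBall (0:E3) d)]
        exact measure_union_le _ _
      rw [huniv] at hsplit
      have hcb : volume (closedBall (0:E3) d) < ⊤ := measure_closedBall_lt_top
      have hlt2 : ((⊤:ENNReal)) < ⊤ := lt_of_le_of_lt hsplit (ENNReal.add_lt_top.2 ⟨hcb, h⟩)
      exact absurd hlt2 (lt_irrefl _)
  obtain ⟨a, b, hda, habl, hbad, hfab⟩ := hab
  have ha0 : 0 < a := lt_of_lt_of_le hd hda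
  have hb0 : 0 < b := ha0.trans habl
  have hblt : b - ‖n‖ < a := by
    rw [hd_def] at hbad
    linarith
  set r : ℝ := (a + max (b - ‖n‖) 0)/2 with hr_def
  have hr0 : 0 ≤ r := by
    have := le_max_right (b - ‖n‖) 0
    rw [hr_def]; linarith
  have hra : r < a := by
    have := max_lt hblt ha0
    rw [hr_def]; linarith
  have hrb : b < ‖n‖ + r := by
    have := le_max_left (b - ‖n‖) 0
    rw [hr_def]; linarith
  set z₀ : E3 := x - (r/‖n‖) • n with hz₀_def
  have hz₀x : ‖x - z₀‖ = r := by
    have : x - z₀ = (r/‖n‖) • n := by rw [hz₀_def]; abel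
    rw [this, norm_smul, Real.norm_eq_abs, abs_of_nonneg (by positivity), div_mul_cancel₀ _ hn']
  have hz₀y : ‖y - z₀‖ = ‖n‖ + r := by
    have h1 : y - z₀ = ((‖n‖ + r)/‖n‖) • n := by
      rw [hz₀_def, hyx]
      rw [add_div, div_self hn', add_smul, one_smul]
      abel
    rw [h1, norm_smul, Real.norm_eq_abs, abs_of_nonneg (by positivity), div_mul_cancel₀ _ hn']
  set S : Set E3 := ball x a ∩ {z | b < ‖y - z‖} with hS_def
  have hSopen : IsOpen S := isOpen_ball.inter
    (isOpen_lt continuous_const ((continuous_const.sub continuous_id).norm))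
  have hz₀S : z₀ ∈ S := by
    constructor
    · rw [mem_ball, dist_eq_norm, ← norm_sub_rev, hz₀x]; exact hra
    · simp only [mem_setOf_eq, hz₀y]; exact hrb
  have hSH : S ⊆ H := by
    intro z hz
    obtain ⟨hz1, hz2⟩ := hz
    rw [mem_ball, dist_eq_norm, ← norm_sub_rev] at hz1
    simp only [mem_setOf_eq] at hz2
    have h11 := F11 z
    show ⟪z, n⟫ < c
    nlinarith [norm_nonneg (x - z), norm_nonneg (y - z)]
  have hSpos : ∀ z ∈ S, 0 < (f (x - z) - f (y - z)) * (g z - g (σ z)) := by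
    intro z hz
    obtain ⟨hz1, hz2⟩ := hz
    rw [mem_ball, dist_eq_norm, ← norm_sub_rev] at hz1
    simp only [mem_setOf_eq] at hz2
    have hA : f (y - z) < f (x - z) := by
      have h1 : f (y - z) ≤ f (b • e) := by
        refine hfdec (b • e) (y - z) ?_
        rw [hre b hb0.le]; exact hz2.le
      have h2 : f (a • e) ≤ f (x - z) := by
        refine hfdec (x - z) (a • e) ?_
        rw [hre a ha0.le]; exact hz1.le
      linarith
    have hB : g (σ z) < g z := by
      refine hg_strict z (σ z) ?_
      have hzc : ⟪z, n⟫ < c := hSH ⟨by rwa [mem_ball, dist_eq_norm, ← norm_sub_rev], hz2⟩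
      have h4 : 0 < 4*(c - ⟪z, n⟫)*c/‖n‖^2 := div_pos (by nlinarith) hN
      have hsq : ‖z‖^2 < ‖σ z‖^2 := by linarith [F5 z]
      nlinarith [norm_nonneg z, norm_nonneg (σ z)]
    exact mul_pos (sub_pos.2 hA) (sub_pos.2 hB)
  -- positivity of the integral
  have hIntH : IntegrableOn (fun z => (f (x - z) - f (y - z)) * (g z - g (σ z))) H := by
    have : (fun z => (f (x - z) - f (y - z)) * (g z - g (σ z)))
        = fun z => ((f (x - z) - f (y - z)) * g z) + ((f (y - z) - f (x - z)) * g (σ z)) := by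
      funext z; ring
    rw [this]
    exact (hsub.add hsubσ).integrableOn
  have hpos : 0 < ∫ z in H, (f (x - z) - f (y - z)) * (g z - g (σ z)) := by
    rw [setIntegral_pos_iff_support_of_nonneg_ae
      ((ae_restrict_iff' HM).2 (Filter.Eventually.of_forall hnonneg)) hIntH]
    refine lt_of_lt_of_le (hSopen.measure_pos volume ⟨z₀, hz₀S⟩) (measure_mono ?_)
    intro z hz
    exact ⟨ne_of_gt (hSpos z hz), hSH hz⟩
  linarith [KQ]

end

/-- Convolution of radial non-increasing functions: the convolution is radial and
non-increasing; if moreover `f > 0` and `g` is strictly decreasing, it is strictly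
decreasing. -/
theorem conv_of_radial_decreasing
    (f g : EuclideanSpace ℝ (Fin 3) → ℝ)
    (hf0 : ∀ x, 0 ≤ f x) (hg0 : ∀ x, 0 ≤ g x)
    (hfint : Integrable f) (hgint : Integrable g)
    (hfrad : ∀ x y : EuclideanSpace ℝ (Fin 3), ‖x‖ = ‖y‖ → f x = f y)
    (hgrad : ∀ x y : EuclideanSpace ℝ (Fin 3), ‖x‖ = ‖y‖ → g x = g y)
    (hfdec : ∀ x y : EuclideanSpace ℝ (Fin 3), ‖x‖ ≤ ‖y‖ → f y ≤ f x)
    (hgdec : ∀ x y : EuclideanSpace ℝ (Fin 3), ‖x‖ ≤ ‖y‖ → g y ≤ g x)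
    (hstrict : (∀ x y : EuclideanSpace ℝ (Fin 3), ‖x‖ < ‖y‖ → f y < f x)
      ∨ (∀ x y : EuclideanSpace ℝ (Fin 3), ‖x‖ < ‖y‖ → g y < g x)) :
    ((∀ x y : EuclideanSpace ℝ (Fin 3), ‖x‖ = ‖y‖ →
        (∫ z, f (x - z) * g z) = ∫ z, f (y - z) * g z) ∧
      (∀ x y : EuclideanSpace ℝ (Fin 3), ‖x‖ ≤ ‖y‖ →
        (∫ z, f (y - z) * g z) ≤ ∫ z, f (x - z) * g z)) ∧
    ((∀ x, 0 < f x) → (∀ x y : EuclideanSpace ℝ (Fin 3), ‖x‖ < ‖y‖ → g y < g x) →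
      ∀ x y : EuclideanSpace ℝ (Fin 3), ‖x‖ < ‖y‖ →
        (∫ z, f (y - z) * g z) < ∫ z, f (x - z) * g z) := by
  have key := fun x y hxy => conv_key f g hf0 hg0 hfint hgint hfrad hgdec hfdec x y hxy
  refine ⟨⟨fun x y hxy => ?_, fun x y hxy => (key x y hxy).1⟩, fun hfpos hgs x y hxy => ?_⟩
  · exact le_antisymm ((key y x hxy.ge).1) ((key x y hxy.le).1)
  · exact (key x y hxy.le).2 hfpos hgs hxy
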